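/- For a positive semidefinite operator ρ on a finite-dimensional Hilbert space A of dimension d, the tensor power ρ^{⊗n} has at most (n+1)^{d-1} distinct eigenvalues. -/

import Mathlib

open scoped Kronecker ComplexOrder
open Matrix

noncomputable section
namespace GEAT

variable {n : Type*} [Fintype n] [DecidableEq n]

/-- Partial trace over the second tensor factor. -/
def ptr2 {A R : Type*} [Fintype R] (M : Matrix (A × R) (A × R) ℂ) : Matrix A A ℂ :=
  fun a a' => ∑ r, M (a, r) (a', r)

/-- Partial trace over the first tensor factor. -/
def ptr1 {A R : Type*} [Fintype A] (M : Matrix (A × R) (A × R) ℂ) : Matrix R R ℂ :=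
  fun r r' => ∑ a, M (a, r) (a, r')

/-- The tensor extension `Φ ⊗ id_C` of a linear map on matrices. -/
def lext {A B : Type*} [Fintype A] [DecidableEq A] [Fintype B] [DecidableEq B]
    (Φ : Matrix A A ℂ →ₗ[ℂ] Matrix B B ℂ) (C : Type*) [Fintype C] [DecidableEq C] :
    Matrix (A × C) (A × C) ℂ →ₗ[ℂ] Matrix (B × C) (B × C) ℂ where
  toFun M := fun p q => Φ (fun a a' => M (a, p.2) (a', q.2)) p.1 q.1
  map_add' M N := by
    funext p q
    have h : (fun a a' => (M + N) (a, p.2) (a', q.2))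
        = (fun a a' => M (a, p.2) (a', q.2)) + (fun a a' => N (a, p.2) (a', q.2)) := rfl
    show Φ _ p.1 q.1 = _
    erw [h, map_add]
    rfl
  map_smul' c M := by
    funext p q
    have h : (fun a a' => (c • M) (a, p.2) (a', q.2))
        = c • (fun a a' => M (a, p.2) (a', q.2)) := rfl
    show Φ _ p.1 q.1 = _
    erw [h, _root_.map_smul]
    rfl

/-- Complete positivity of a linear map on matrices. -/
def IsCPMap {A B : Type*} [Fintype A] [DecidableEq A] [Fintype B] [DecidableEq B]
    (Φ : Matrix A A ℂ →ₗ[ℂ] Matrix B B ℂ) : Prop :=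
  ∀ (k : ℕ) (M : Matrix (A × Fin k) (A × Fin k) ℂ), M.PosSemidef → ((lext Φ (Fin k)) M).PosSemidef

/-- Trace preservation. -/
def IsTPMap {A B : Type*} [Fintype A] [DecidableEq A] [Fintype B] [DecidableEq B]
    (Φ : Matrix A A ℂ →ₗ[ℂ] Matrix B B ℂ) : Prop :=
  ∀ M, (Φ M).trace = M.trace

/-- Quantum channel: completely positive and trace preserving. -/
def IsCPTPMap {A B : Type*} [Fintype A] [DecidableEq A] [Fintype B] [DecidableEq B]
    (Φ : Matrix A A ℂ →ₗ[ℂ] Matrix B B ℂ) : Prop :=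
  IsCPMap Φ ∧ IsTPMap Φ

/-- A density matrix. -/
def IsState {A : Type*} [Fintype A] (ρ : Matrix A A ℂ) : Prop :=
  ρ.PosSemidef ∧ ρ.trace = 1

/-- Real matrix power, via the continuous functional calculus. -/
def mrpow (M : Matrix n n ℂ) (p : ℝ) : Matrix n n ℂ :=
  cfc (fun x : ℝ => x ^ p) M

/-- Sandwiched Rényi divergence of order α (base-2 logarithm). -/
def sandwichedRenyi (α : ℝ) (ρ σ : Matrix n n ℂ) : ℝ :=
  (α - 1)⁻¹ * Real.logb 2
    ((mrpow (mrpow σ ((1 - α) / (2 * α)) * ρ * mrpow σ ((1 - α) / (2 * α))) α).trace.re)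

/-- Conditional Rényi entropy `H_α↓(A|B) = −D_α(ρ_AB ‖ 1_A ⊗ ρ_B)`. -/
def condH (α : ℝ) {A B : Type*} [Fintype A] [DecidableEq A] [Fintype B]
    [DecidableEq B] (ρ : Matrix (A × B) (A × B) ℂ) : ℝ :=
  - sandwichedRenyi α ρ ((1 : Matrix A A ℂ) ⊗ₖ ptr1 ρ)

/-- Conditional Rényi entropy `H_α↑(A|B) = sup_σ −D_α(ρ_AB ‖ 1_A ⊗ σ_B)`. -/
def condHup (α : ℝ) {A B : Type*} [Fintype A] [DecidableEq A] [Fintype B]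
    [DecidableEq B] (ρ : Matrix (A × B) (A × B) ℂ) : ℝ :=
  ⨆ σ : {σ : Matrix B B ℂ // IsState σ},
    - sandwichedRenyi α ρ ((1 : Matrix A A ℂ) ⊗ₖ (σ : Matrix B B ℂ))

/-- Von Neumann entropy (base 2). -/
def vnEntropy (ρ : Matrix n n ℂ) : ℝ :=
  - ((cfc (fun x : ℝ => x * Real.logb 2 x) ρ).trace.re)

/-- Conditional von Neumann entropy `H(A|B) = H(AB) − H(B)`. -/
def condVN {A B : Type*} [Fintype A] [DecidableEq A] [Fintype B] [DecidableEq B]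
    (ρ : Matrix (A × B) (A × B) ℂ) : ℝ :=
  vnEntropy ρ - vnEntropy (ptr1 ρ)

/-- Max-relative entropy `D_max(ρ‖σ) = log min {λ ≥ 0 : ρ ≤ λσ}`. -/
def Dmax (ρ σ : Matrix n n ℂ) : ℝ :=
  Real.logb 2 (sInf {l : ℝ | 0 ≤ l ∧ (l • σ - ρ).PosSemidef})

/-- Fidelity `F(ρ,σ) = Tr √(√σ ρ √σ)`. -/
def fidelity (ρ σ : Matrix n n ℂ) : ℝ :=
  ((mrpow (mrpow σ (1/2 : ℝ) * ρ * mrpow σ (1/2 : ℝ)) (1/2 : ℝ)).trace).re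

/-- Purified distance. -/
def purifiedDist (ρ σ : Matrix n n ℂ) : ℝ :=
  Real.sqrt (1 - (fidelity ρ σ) ^ 2)

/-- Trace norm. -/
def trNorm {m : Type*} [Fintype m] [DecidableEq m] {k : Type*} [Fintype k]
    (M : Matrix k m ℂ) : ℝ :=
  ((mrpow (Mᴴ * M) (1/2 : ℝ)).trace).re

/-- Smoothed conditional min-entropy (smoothing in purified distance). -/
def smoothHmin (ε : ℝ) {A B : Type*} [Fintype A] [DecidableEq A] [Fintype B]
    [DecidableEq B] (ρ : Matrix (A × B) (A × B) ℂ) : ℝ :=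
  sSup {h : ℝ | ∃ τ : Matrix (A × B) (A × B) ℂ, τ.PosSemidef ∧ τ.trace.re ≤ 1 ∧
    purifiedDist ρ τ ≤ ε ∧ ∃ σ : Matrix B B ℂ, IsState σ ∧
      h = - Dmax τ ((1 : Matrix A A ℂ) ⊗ₖ σ)}

/-- Smoothed conditional max-entropy (smoothing in purified distance). -/
def smoothHmax (ε : ℝ) {A B : Type*} [Fintype A] [DecidableEq A] [Fintype B]
    [DecidableEq B] (ρ : Matrix (A × B) (A × B) ℂ) : ℝ :=
  Real.logb 2 (sInf {v : ℝ | ∃ τ : Matrix (A × B) (A × B) ℂ, τ.PosSemidef ∧ τ.trace.re ≤ 1 ∧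
    purifiedDist ρ τ ≤ ε ∧
    v = ⨆ σ : {σ : Matrix B B ℂ // IsState σ},
      (trNorm (mrpow τ (1/2 : ℝ) * mrpow ((1 : Matrix A A ℂ) ⊗ₖ (σ : Matrix B B ℂ)) (1/2 : ℝ))) ^ 2})

/-- n-fold tensor power of a matrix. -/
def tpow {A : Type*} [Fintype A] (ρ : Matrix A A ℂ) (m : ℕ) :
    Matrix (Fin m → A) (Fin m → A) ℂ :=
  fun x y => ∏ i, ρ (x i) (y i)

/-- n-fold tensor power of a linear map on matrices. -/
def npow {A B : Type*} [Fintype A] [DecidableEq A] [Fintype B] [DecidableEq B]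
    (Φ : Matrix A A ℂ →ₗ[ℂ] Matrix B B ℂ) (m : ℕ) :
    Matrix (Fin m → A) (Fin m → A) ℂ →ₗ[ℂ] Matrix (Fin m → B) (Fin m → B) ℂ where
  toFun M := fun x y => ∑ a : Fin m → A, ∑ a' : Fin m → A,
    M a a' * ∏ i, Φ (Matrix.single (a i) (a' i) 1) (x i) (y i)
  map_add' M N := by
    funext x y
    show ∑ a : Fin m → A, ∑ a' : Fin m → A, _ = _
    simp [Matrix.add_apply, add_mul, Finset.sum_add_distrib]
    rfl
  map_smul' c M := by
    funext x y
    show ∑ a : Fin m → A, ∑ a' : Fin m → A, _ = _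
    simp [Matrix.smul_apply, smul_eq_mul, Finset.mul_sum, mul_assoc]
    show _ = c * _
    simp [Finset.mul_sum]

/-- Stabilised channel divergence of order α. -/
def channelDiv (α : ℝ) {A B : Type*} [Fintype A] [DecidableEq A] [Fintype B]
    [DecidableEq B] (Φ Ψ : Matrix A A ℂ →ₗ[ℂ] Matrix B B ℂ) : ℝ :=
  ⨆ ω : {ω : Matrix (A × A) (A × A) ℂ // IsState ω},
    sandwichedRenyi α (lext Φ A (ω : Matrix (A × A) (A × A) ℂ))
      (lext Ψ A (ω : Matrix (A × A) (A × A) ℂ))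

/-- Regularised channel divergence `sup_n (1/n) D_α(Φ^{⊗n} ‖ Ψ^{⊗n})`. -/
def channelDivReg (α : ℝ) {A B : Type*} [Fintype A] [DecidableEq A] [Fintype B]
    [DecidableEq B] (Φ Ψ : Matrix A A ℂ →ₗ[ℂ] Matrix B B ℂ) : ℝ :=
  ⨆ m : ℕ, ((m : ℝ) + 1)⁻¹ * channelDiv α (npow Φ (m + 1)) (npow Ψ (m + 1))

open scoped Classical in
/-- Spectral projector of a Hermitian matrix onto the eigenspace of `t`. -/
def specProj {M : Matrix n n ℂ} (hM : M.IsHermitian) (t : ℝ) : Matrix n n ℂ :=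
  ∑ i : n, if hM.eigenvalues i = t then
    (hM.eigenvectorUnitary : Matrix n n ℂ) * Matrix.single i i 1 *
      star (hM.eigenvectorUnitary : Matrix n n ℂ)
  else 0

open scoped Classical in
/-- The spectral pinching map `P_M(ω) = Σ_λ P_λ ω P_λ` (zero if `M` is not Hermitian). -/
def pinching (M ω : Matrix n n ℂ) : Matrix n n ℂ :=
  if hM : M.IsHermitian then
    ∑ t ∈ Finset.univ.image hM.eigenvalues, specProj hM t * ω * specProj hM t
  else 0


lemma tpow_mul {A : Type*} [Fintype A] [DecidableEq A] (M N : Matrix A A ℂ) (m : ℕ) :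
    tpow (M * N) m = tpow M m * tpow N m := by
  funext x y
  show ∏ i, (M * N) (x i) (y i) = ∑ z : Fin m → A, (∏ i, M (x i) (z i)) * ∏ i, N (z i) (y i)
  simp only [Matrix.mul_apply]
  rw [Finset.prod_univ_sum (fun _ => (Finset.univ : Finset A))
    (fun i a => M (x i) a * N a (y i))]
  simp [Fintype.piFinset_univ, Finset.prod_mul_distrib]

lemma tpow_diagonal {A : Type*} [Fintype A] [DecidableEq A] (f : A → ℂ) (m : ℕ) :
    tpow (Matrix.diagonal f) m = Matrix.diagonal (fun x : Fin m → A => ∏ i, f (x i)) := by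
  funext x y
  by_cases h : x = y
  · subst h; simp [tpow, Matrix.diagonal_apply_eq]
  · obtain ⟨i, hi⟩ := Function.ne_iff.mp h
    rw [Matrix.diagonal_apply_ne _ h]
    exact Finset.prod_eq_zero (Finset.mem_univ i) (Matrix.diagonal_apply_ne _ hi)

lemma tpow_one {A : Type*} [Fintype A] [DecidableEq A] (m : ℕ) :
    tpow (1 : Matrix A A ℂ) m = 1 := by
  rw [← Matrix.diagonal_one, tpow_diagonal]
  simp

/-- For a positive semidefinite operator `ρ` on a finite-dimensional Hilbert
space `A` of dimension `d`, the tensor power `ρ^{⊗n}` has at most `(n+1)^(d-1)` distinct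
eigenvalues. -/
theorem tensor_power_spectrum_card {A : Type*} [Fintype A] [DecidableEq A]
    (ρ : Matrix A A ℂ) (hρ : ρ.PosSemidef) (m : ℕ) :
    (spectrum ℂ (tpow ρ m)).ncard ≤ (m + 1) ^ (Fintype.card A - 1) := by
  classical
  have hH : ρ.IsHermitian := hρ.1
  set U : Matrix A A ℂ := ↑hH.eigenvectorUnitary
  set f : A → ℂ := RCLike.ofReal ∘ hH.eigenvalues with hf
  -- conjugation unit
  have hU1 : tpow U m * tpow (star U) m = 1 := by
    rw [← tpow_mul, (Unitary.mem_iff.mp hH.eigenvectorUnitary.2).2, tpow_one]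
  have hU2 : tpow (star U) m * tpow U m = 1 := by
    rw [← tpow_mul, (Unitary.mem_iff.mp hH.eigenvectorUnitary.2).1, tpow_one]
  set u : (Matrix (Fin m → A) (Fin m → A) ℂ)ˣ := ⟨tpow U m, tpow (star U) m, hU1, hU2⟩
  have hdecomp : tpow ρ m = (u : Matrix (Fin m → A) (Fin m → A) ℂ)
      * Matrix.diagonal (fun x : Fin m → A => ∏ i, f (x i))
      * ((u⁻¹ : (Matrix (Fin m → A) (Fin m → A) ℂ)ˣ) : Matrix (Fin m → A) (Fin m → A) ℂ) := by
    have := hH.spectral_theorem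
    show tpow ρ m = tpow U m * _ * tpow (star U) m
    rw [← tpow_diagonal, ← tpow_mul, ← tpow_mul]
    exact congrArg (fun M => tpow M m) this
  have hspec : spectrum ℂ (tpow ρ m) = Set.range (fun x : Fin m → A => ∏ i, f (x i)) := by
    rw [hdecomp, spectrum.units_conjugate, _root_.spectrum_diagonal]
  rw [hspec]
  -- counting
  set g : (Fin m → A) → ℂ := fun x => ∏ i, f (x i)
  have hrange : Set.range g = ↑(Finset.univ.image g) := by
    simp
  rw [hrange, Set.ncard_coe_finset]
  -- counts map
  set h : (Fin m → A) → (A → Fin (m + 1)) := fun x a =>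
    ⟨(Finset.univ.filter fun i => x i = a).card,
      Nat.lt_succ_of_le (le_trans (Finset.card_filter_le _ _) (by simp))⟩ with hh
  set G : (A → Fin (m + 1)) → ℂ := fun c => ∏ a, f a ^ (c a : ℕ) with hG
  have hfac : ∀ x, g x = G (h x) := by
    intro x
    show ∏ i, f (x i) = ∏ a : A, f a ^ ((Finset.univ.filter fun i => x i = a).card)
    rw [Finset.prod_comp f x]
    refine Finset.prod_subset (Finset.subset_univ _) ?_
    intro a _ ha
    have : (Finset.univ.filter fun i => x i = a).card = 0 := by
      rw [Finset.card_eq_zero, Finset.filter_eq_empty_iff]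
      intro i _ hxi
      exact ha (Finset.mem_image.mpr ⟨i, Finset.mem_univ i, hxi⟩)
    rw [this, pow_zero]
  have himg : Finset.univ.image g = (Finset.univ.image h).image G := by
    rw [Finset.image_image]
    exact Finset.image_congr fun x _ => hfac x
  rw [himg]
  refine le_trans (Finset.card_image_le) ?_
  -- sum of counts is m
  have hsum : ∀ x : Fin m → A, ∑ a, ((h x a : ℕ)) = m := by
    intro x
    have := Finset.card_eq_sum_card_fiberwise
      (f := x) (s := (Finset.univ : Finset (Fin m))) (t := Finset.univ) (fun i _ => Finset.mem_univ _)
    simpa using this.symm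
  rcases isEmpty_or_nonempty A with hA | hA
  · have : Fintype.card (A → Fin (m+1)) = 1 := by simp
    calc (Finset.univ.image h).card ≤ Fintype.card (A → Fin (m+1)) :=
          le_trans (Finset.card_le_card (Finset.subset_univ _)) (by simp [Finset.card_univ])
      _ = 1 := this
      _ ≤ (m + 1) ^ (Fintype.card A - 1) := Nat.one_le_pow _ _ (Nat.succ_pos m)
  · obtain ⟨a0⟩ := hA
    set r : (A → Fin (m + 1)) → ({a : A // a ≠ a0} → Fin (m + 1)) :=
      fun c a => c a.1 with hr
    have hinj : Set.InjOn r ↑(Finset.univ.image h) := by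
      intro c hc c' hc' hrc
      obtain ⟨x, _, rfl⟩ := Finset.mem_image.mp hc
      obtain ⟨x', _, rfl⟩ := Finset.mem_image.mp hc'
      funext a
      by_cases ha : a = a0
      · subst ha
        have key : ∀ y : Fin m → A, ((h y a : ℕ))
            = m - ∑ b : {b : A // b ≠ a}, ((h y b.1 : ℕ)) := by
          intro y
          have hsplit : ∑ b : A, ((h y b : ℕ))
              = ((h y a : ℕ)) + ∑ b : {b : A // b ≠ a}, ((h y b.1 : ℕ)) := by
            rw [← Finset.add_sum_erase _ _ (Finset.mem_univ a)]
            congr 1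
            rw [← Finset.sum_subtype (Finset.univ.erase a) (by simp [eq_comm]) (fun b => ((h y b : ℕ)))]
          have h1 := hsum y
          omega
        have hv : ((h x a : ℕ)) = ((h x' a : ℕ)) := by
          rw [key x, key x']
          congr 1
          exact Finset.sum_congr rfl fun b _ => by
            have := congrFun hrc b
            simpa [hr] using congrArg Fin.val this
        exact Fin.ext hv
      · have := congrFun hrc ⟨a, ha⟩
        simpa [hr] using this
    calc (Finset.univ.image h).card
        ≤ (Finset.univ : Finset ({a : A // a ≠ a0} → Fin (m + 1))).card :=
          Finset.card_le_card_of_injOn r (fun _ _ => Finset.mem_univ _) hinj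
      _ = (m + 1) ^ (Fintype.card A - 1) := by
          rw [Finset.card_univ, Fintype.card_fun, Fintype.card_fin]
          congr 1
          rw [Fintype.card_subtype_compl]
          simp


end GEAT
end
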